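/- Let n ≥ 2, R > 0 and consider the operator on smooth 2π-periodic functions v given by L v = v'''' − ((n-1)^2/R^4) v. Its eigenvalues on the space spanned by {1, cos(mθ), sin(mθ) : m ≥ 1} are λ_m = m^4 − (n-1)^2/R^4, with multiplicity 1 for m = 0 and 2 for m ≥ 1. Consequently, if √(n-1)/R ∉ ℕ*, the number of negative eigenvalues counted with multiplicity is 1 + 2⌊√(n-1)/R⌋ and there are no zero eigenvalues; if √(n-1)/R ∈ ℕ*, the number of negative eigenvalues counted with multiplicity is 1 + 2(√(n-1)/R − 1) and the kernel has dimension 2. -/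
import Mathlib


open Real Set

private lemma hasDerivAt_cos_mul' (a c θ : ℝ) :
    HasDerivAt (fun θ : ℝ => c * Real.cos (a*θ)) ((c * -a) * Real.sin (a*θ)) θ := by
  have h : HasDerivAt (fun θ : ℝ => Real.cos (a*θ)) (-Real.sin (a*θ) * a) θ :=
    (Real.hasDerivAt_cos (a*θ)).comp θ (by simpa using (hasDerivAt_id θ).const_mul a)
  simpa [mul_comm, mul_assoc, mul_left_comm] using h.const_mul c

private lemma hasDerivAt_sin_mul' (a c θ : ℝ) :
    HasDerivAt (fun θ : ℝ => c * Real.sin (a*θ)) ((c * a) * Real.cos (a*θ)) θ := by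
  have h : HasDerivAt (fun θ : ℝ => Real.sin (a*θ)) (Real.cos (a*θ) * a) θ :=
    (Real.hasDerivAt_sin (a*θ)).comp θ (by simpa using (hasDerivAt_id θ).const_mul a)
  simpa [mul_comm, mul_assoc, mul_left_comm] using h.const_mul c

private lemma deriv_c_cos (a c : ℝ) :
    deriv (fun θ : ℝ => c * Real.cos (a*θ)) = fun θ => (c * -a) * Real.sin (a*θ) :=
  funext fun θ => (hasDerivAt_cos_mul' a c θ).deriv

private lemma deriv_c_sin (a c : ℝ) :
    deriv (fun θ : ℝ => c * Real.sin (a*θ)) = fun θ => (c * a) * Real.cos (a*θ) :=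
  funext fun θ => (hasDerivAt_sin_mul' a c θ).deriv

private lemma iter4_cos (a : ℝ) :
    iteratedDeriv 4 (fun θ : ℝ => Real.cos (a*θ)) = fun θ => a^4 * Real.cos (a*θ) := by
  have h0 : (fun θ : ℝ => Real.cos (a*θ)) = fun θ : ℝ => (1:ℝ) * Real.cos (a*θ) := by
    funext θ; ring
  rw [h0]
  simp only [show (4:ℕ) = 3+1 from rfl, show (3:ℕ) = 2+1 from rfl,
    show (2:ℕ) = 1+1 from rfl, iteratedDeriv_succ', deriv_c_cos, deriv_c_sin,
    iteratedDeriv_one, iteratedDeriv_zero]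
  funext θ; ring

private lemma iter4_sin (a : ℝ) :
    iteratedDeriv 4 (fun θ : ℝ => Real.sin (a*θ)) = fun θ => a^4 * Real.sin (a*θ) := by
  have h0 : (fun θ : ℝ => Real.sin (a*θ)) = fun θ : ℝ => (1:ℝ) * Real.sin (a*θ) := by
    funext θ; ring
  rw [h0]
  simp only [show (4:ℕ) = 3+1 from rfl, show (3:ℕ) = 2+1 from rfl,
    show (2:ℕ) = 1+1 from rfl, iteratedDeriv_succ', deriv_c_cos, deriv_c_sin,
    iteratedDeriv_one, iteratedDeriv_zero]
  funext θ; ring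

theorem stmt_11 (n : ℕ) (hn : 2 ≤ n) (R : ℝ) (hR : 0 < R)
    (lam : ℕ → ℝ) (hlam : ∀ m, lam m = (m:ℝ)^4 - ((n:ℝ)-1)^2 / R^4)
    (L : (ℝ → ℝ) → (ℝ → ℝ))
    (hL : ∀ v, L v = fun θ => iteratedDeriv 4 v θ - ((n:ℝ)-1)^2 / R^4 * v θ) :
    (∀ m : ℕ, L (fun θ => Real.cos (m*θ)) = fun θ => lam m * Real.cos (m*θ)) ∧
    (∀ m : ℕ, 1 ≤ m → L (fun θ => Real.sin (m*θ)) = fun θ => lam m * Real.sin (m*θ)) ∧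
    ((¬ ∃ m : ℕ, 0 < m ∧ (m:ℝ) = Real.sqrt ((n:ℝ)-1) / R) →
      {m : ℕ | lam m = 0} = ∅ ∧
      1 + 2 * {m : ℕ | 0 < m ∧ lam m < 0}.ncard
        = 1 + 2 * Nat.floor (Real.sqrt ((n:ℝ)-1) / R)) ∧
    (∀ m0 : ℕ, 0 < m0 → (m0:ℝ) = Real.sqrt ((n:ℝ)-1) / R →
      {m : ℕ | lam m = 0} = {m0} ∧
      2 * {m : ℕ | 0 < m ∧ lam m = 0}.ncard = 2 ∧
      1 + 2 * {m : ℕ | 0 < m ∧ lam m < 0}.ncard = 1 + 2 * (m0 - 1)) := by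
  set c : ℝ := Real.sqrt ((n:ℝ)-1) / R with hc_def
  have hn1 : (0:ℝ) ≤ (n:ℝ) - 1 := by
    have : (2:ℝ) ≤ (n:ℝ) := by exact_mod_cast hn
    linarith
  have hn1' : (1:ℝ) ≤ (n:ℝ) - 1 := by
    have : (2:ℝ) ≤ (n:ℝ) := by exact_mod_cast hn
    linarith
  have hcpos : 0 < c := by
    apply div_pos _ hR
    have := Real.sqrt_le_sqrt hn1'
    have h1 : (1:ℝ) = Real.sqrt 1 := by simp
    nlinarith [Real.sqrt_nonneg ((n:ℝ)-1), Real.one_le_sqrt.mpr hn1']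
  have hc4 : c^4 = ((n:ℝ)-1)^2 / R^4 := by
    rw [hc_def, div_pow]
    congr 1
    rw [show (4:ℕ) = 2*2 from rfl, pow_mul, Real.sq_sqrt hn1]
  have hlam' : ∀ m : ℕ, lam m = (m:ℝ)^4 - c^4 := by
    intro m; rw [hlam, hc4]
  have hlt : ∀ m : ℕ, lam m < 0 ↔ (m:ℝ) < c := by
    intro m
    rw [hlam', sub_neg]
    exact pow_lt_pow_iff_left₀ (by positivity) hcpos.le (by norm_num)
  have heq : ∀ m : ℕ, lam m = 0 ↔ (m:ℝ) = c := by
    intro m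
    rw [hlam', sub_eq_zero]
    exact pow_left_inj₀ (by positivity) hcpos.le (by norm_num)
  refine ⟨?_, ?_, ?_, ?_⟩
  · intro m
    rw [hL]
    funext θ
    have := congrFun (iter4_cos (m:ℝ)) θ
    simp only [this, hlam', hc4]
    ring
  · intro m _
    rw [hL]
    funext θ
    have := congrFun (iter4_sin (m:ℝ)) θ
    simp only [this, hlam', hc4]
    ring
  · intro h
    have hzero : {m : ℕ | lam m = 0} = ∅ := by
      ext m
      simp only [Set.mem_setOf_eq, Set.mem_empty_iff_false, iff_false]
      intro hm
      rw [heq m] at hm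
      rcases Nat.eq_zero_or_pos m with h0 | h0
      · rw [h0] at hm; simp at hm; linarith
      · exact h ⟨m, h0, hm⟩
    refine ⟨hzero, ?_⟩
    have hset : {m : ℕ | 0 < m ∧ lam m < 0} = ↑(Finset.Ico 1 (Nat.floor c + 1)) := by
      ext m
      simp only [Set.mem_setOf_eq, Finset.coe_Ico, Set.mem_Ico, hlt]
      constructor
      · rintro ⟨h1, h2⟩
        exact ⟨h1, Nat.lt_succ_of_le (Nat.le_floor h2.le)⟩
      · rintro ⟨h1, h2⟩
        have hle : (m:ℝ) ≤ c := by
          have := Nat.le_of_lt_succ h2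
          exact le_trans (by exact_mod_cast this) (Nat.floor_le hcpos.le)
        refine ⟨h1, lt_of_le_of_ne hle ?_⟩
        intro hmc
        exact h ⟨m, h1, hmc⟩
    rw [hset, Set.ncard_coe_finset, Nat.card_Ico]
    simp
  · intro m0 hm0 hm0c
    have hzero : {m : ℕ | lam m = 0} = {m0} := by
      ext m
      simp only [Set.mem_setOf_eq, Set.mem_singleton_iff, heq, ← hm0c]
      exact Nat.cast_inj
    refine ⟨hzero, ?_, ?_⟩
    · have : {m : ℕ | 0 < m ∧ lam m = 0} = {m0} := by
        ext m
        simp only [Set.mem_setOf_eq, Set.mem_singleton_iff, heq, ← hm0c, Nat.cast_inj]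
        constructor
        · rintro ⟨_, h2⟩; exact h2
        · rintro rfl; exact ⟨hm0, rfl⟩
      rw [this, Set.ncard_singleton]
    · have hset : {m : ℕ | 0 < m ∧ lam m < 0} = ↑(Finset.Ico 1 m0) := by
        ext m
        simp only [Set.mem_setOf_eq, Finset.coe_Ico, Set.mem_Ico, hlt, ← hm0c, Nat.cast_lt]
        exact Iff.rfl
      rw [hset, Set.ncard_coe_finset, Nat.card_Ico]
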